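/- Let V be a finite-dimensional real vector space, Q a symmetric bilinear form on V, e an element of V, and e₁, …, eₙ a basis of V satisfying: (i) writing e = a₁e₁ + ⋯ + aₙeₙ, one has aᵢ > 0 for all i; (ii) Q(x, e) ≤ 0 for all x ∈ V; (iii) Q(eᵢ, eⱼ) ≥ 0 for all i ≠ j; (iv) for any i ≠ j there is a finite sequence i₁, …, i_l with i₁ = i, i_l = j and Q(e_{i_t}, e_{i_{t+1}}) > 0 for all 1 ≤ t < l. Then Q(x, x) ≤ 0 for all x ∈ V. -/

import Mathlib

/-- Sublemma in Appendix B (Zariski's lemma): a symmetric bilinear form satisfying the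
connectedness/positivity conditions with respect to a basis is negative semi-definite. -/
theorem stmt0 {V : Type*} [AddCommGroup V] [Module ℝ V] [FiniteDimensional ℝ V]
    (Q : V →ₗ[ℝ] V →ₗ[ℝ] ℝ) (hQsymm : ∀ x y, Q x y = Q y x)
    {n : ℕ} (b : Module.Basis (Fin n) ℝ V) (e : V)
    (hpos : ∀ i, 0 < b.repr e i)
    (hneg : ∀ x, Q x e ≤ 0)
    (hnonneg : ∀ i j : Fin n, i ≠ j → 0 ≤ Q (b i) (b j))
    (hconn : ∀ i j : Fin n, i ≠ j → ∃ l : ℕ, ∃ c : Fin (l + 1) → Fin n,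
      c 0 = i ∧ c (Fin.last l) = j ∧
      ∀ t : Fin l, 0 < Q (b (c t.castSucc)) (b (c t.succ))) :
    ∀ x : V, Q x x ≤ 0 := by
  intro x
  classical
  set a : Fin n → ℝ := fun i => b.repr e i with ha
  set c : Fin n → ℝ := fun i => b.repr x i with hc
  set t : Fin n → ℝ := fun i => c i / a i with ht
  set M : Fin n → Fin n → ℝ := fun i j => Q (b i) (b j) with hM
  have hMsymm : ∀ i j, M i j = M j i := fun i j => hQsymm _ _
  have hane : ∀ i, a i ≠ 0 := fun i => ne_of_gt (hpos i)
  have hct : ∀ i, c i = t i * a i := by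
    intro i
    simp only [ht]
    exact (div_mul_cancel₀ (c i) (hane i)).symm
  have hx : x = ∑ i, c i • b i := (b.sum_repr x).symm
  have he : e = ∑ j, a j • b j := (b.sum_repr e).symm
  have hQxx : Q x x = ∑ i, ∑ j, c i * c j * M i j := by
    conv_lhs => rw [hx]
    simp only [map_sum, map_smul, LinearMap.sum_apply, LinearMap.smul_apply,
      smul_eq_mul, hM, Finset.mul_sum]
    rw [Finset.sum_comm]
    exact Finset.sum_congr rfl fun i _ => Finset.sum_congr rfl fun j _ => by ring
  have hQbe : ∀ i, Q (b i) e = ∑ j, a j * M i j := by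
    intro i
    conv_lhs => rw [he]
    simp [hM]
  -- the nonnegative sum
  set S : ℝ := ∑ i, ∑ j, a i * a j * M i j * (t i - t j) ^ 2 with hS
  have hSnonneg : 0 ≤ S := by
    apply Finset.sum_nonneg
    intro i _
    apply Finset.sum_nonneg
    intro j _
    rcases eq_or_ne i j with rfl | hij
    · simp
    · have h1 := hnonneg i j hij
      have h2 := hpos i
      have h3 := hpos j
      positivity
  have expand : ∀ i j, a i * a j * M i j * (t i - t j) ^ 2 =
      t i ^ 2 * a i * (a j * M i j) + t j ^ 2 * a j * (a i * M i j)
        - 2 * (c i * c j * M i j) := by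
    intro i j
    rw [hct i, hct j]
    ring
  have hswap : (∑ i, ∑ j, t j ^ 2 * a j * (a i * M i j))
      = ∑ i, ∑ j, t i ^ 2 * a i * (a j * M i j) := by
    rw [Finset.sum_comm]
    exact Finset.sum_congr rfl fun i _ => Finset.sum_congr rfl fun j _ => by
      rw [hMsymm j i]
  have hSval : S = 2 * (∑ i, t i ^ 2 * a i * Q (b i) e)
      - 2 * (∑ i, ∑ j, c i * c j * M i j) := by
    calc S = ∑ i, ∑ j, (t i ^ 2 * a i * (a j * M i j) + t j ^ 2 * a j * (a i * M i j)
        - 2 * (c i * c j * M i j)) := by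
          exact Finset.sum_congr rfl fun i _ => Finset.sum_congr rfl fun j _ => expand i j
      _ = (∑ i, ∑ j, t i ^ 2 * a i * (a j * M i j))
          + (∑ i, ∑ j, t j ^ 2 * a j * (a i * M i j))
          - 2 * (∑ i, ∑ j, c i * c j * M i j) := by
          simp [Finset.sum_add_distrib, Finset.sum_sub_distrib, Finset.mul_sum]
      _ = 2 * (∑ i, ∑ j, t i ^ 2 * a i * (a j * M i j))
          - 2 * (∑ i, ∑ j, c i * c j * M i j) := by rw [hswap]; ring
      _ = 2 * (∑ i, t i ^ 2 * a i * Q (b i) e)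
          - 2 * (∑ i, ∑ j, c i * c j * M i j) := by
          congr 1
          congr 1
          exact Finset.sum_congr rfl fun i _ => by rw [hQbe i, Finset.mul_sum]
  have hfirst : (∑ i, t i ^ 2 * a i * Q (b i) e) ≤ 0 := by
    apply Finset.sum_nonpos
    intro i _
    have h1 : Q (b i) e ≤ 0 := hneg (b i)
    have h0 := hpos i
    have h2 : 0 ≤ t i ^ 2 * a i := by positivity
    exact mul_nonpos_of_nonneg_of_nonpos h2 h1
  have : Q x x = (∑ i, t i ^ 2 * a i * Q (b i) e) - S / 2 := by
    rw [hQxx]; rw [hSval]; ring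
  rw [this]
  have : 0 ≤ S / 2 := by linarith
  linarith
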